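/- Let g(τ) = τ/√(τ² + r) for fixed r > 0, let s ∈ ℝ with s < 0, let Δ > 0 with s - Δ < 0 < s + Δ, and let 0 < α < 1. Then the integral ∫_{s-Δ}^{s+Δ} g(τ) |s - τ|^{-α} dτ is strictly negative. (Symmetrically, if s > 0 the integral is strictly positive.) -/
import Mathlib


open MeasureTheory intervalIntegral Set

lemma g_strictMono {r : ℝ} (hr : 0 < r) :
    StrictMono (fun τ : ℝ => τ / Real.sqrt (τ ^ 2 + r)) := by
  intro x y hxy
  have hax : 0 < Real.sqrt (x ^ 2 + r) := Real.sqrt_pos.2 (by positivity)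
  have hay : 0 < Real.sqrt (y ^ 2 + r) := Real.sqrt_pos.2 (by positivity)
  have hx2 : Real.sqrt (x ^ 2 + r) ^ 2 = x ^ 2 + r := Real.sq_sqrt (by positivity)
  have hy2 : Real.sqrt (y ^ 2 + r) ^ 2 = y ^ 2 + r := Real.sq_sqrt (by positivity)
  simp only
  rw [div_lt_div_iff₀ hax hay]
  rcases le_or_gt 0 x with hx | hx
  · have hy0 : 0 < y := lt_of_le_of_lt hx hxy
    have hxy2 : x ^ 2 < y ^ 2 := by nlinarith
    have hsq : (x * Real.sqrt (y ^ 2 + r)) ^ 2 < (y * Real.sqrt (x ^ 2 + r)) ^ 2 := by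
      rw [mul_pow, mul_pow, hx2, hy2]
      nlinarith [mul_pos hr (sub_pos.2 hxy2)]
    exact lt_of_pow_lt_pow_left₀ 2 (mul_nonneg hy0.le hax.le) hsq
  · rcases le_or_gt y 0 with hy | hy
    · have hxy2 : y ^ 2 < x ^ 2 := by
        nlinarith [mul_pos (show (0:ℝ) < y - x by linarith) (show (0:ℝ) < -(x + y) by linarith)]
      have hsq : ((-y) * Real.sqrt (x ^ 2 + r)) ^ 2 < ((-x) * Real.sqrt (y ^ 2 + r)) ^ 2 := by
        rw [mul_pow, mul_pow, hx2, hy2]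
        nlinarith [mul_pos hr (sub_pos.2 hxy2)]
      have := lt_of_pow_lt_pow_left₀ 2 (mul_nonneg (by linarith) hay.le) hsq
      nlinarith
    · have h1 : x * Real.sqrt (y ^ 2 + r) < 0 := mul_neg_of_neg_of_pos hx hay
      have h2 : 0 < y * Real.sqrt (x ^ 2 + r) := mul_pos hy hax
      linarith

lemma g_cont {r : ℝ} (hr : 0 < r) :
    Continuous (fun τ : ℝ => τ / Real.sqrt (τ ^ 2 + r)) := by
  apply continuous_id'.div
  · exact ((continuous_pow 2).add continuous_const).sqrt
  · intro x
    exact (Real.sqrt_pos.2 (by positivity)).ne'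

lemma abs_rpow_intInt {α : ℝ} (hα1 : α < 1) (a b : ℝ) :
    IntervalIntegrable (fun x : ℝ => |x| ^ (-α)) volume a b := by
  have key : ∀ c : ℝ, 0 ≤ c → IntervalIntegrable (fun x : ℝ => |x| ^ (-α)) volume 0 c := by
    intro c hc
    have h := intervalIntegrable_rpow' (a := 0) (b := c) (r := -α) (by linarith)
    rw [intervalIntegrable_iff, uIoc_of_le hc] at h ⊢
    refine h.congr_fun (fun x hx => ?_) measurableSet_Ioc
    rw [abs_of_pos hx.1]
  have allc : ∀ c : ℝ, IntervalIntegrable (fun x : ℝ => |x| ^ (-α)) volume 0 c := by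
    intro c
    rcases le_total 0 c with hc | hc
    · exact key c hc
    · rw [IntervalIntegrable.iff_comp_neg]
      simp only [abs_neg, neg_zero]
      exact key (-c) (by linarith)
  exact (allc a).symm.trans (allc b)

lemma w_intInt {α : ℝ} (hα1 : α < 1) (s a b : ℝ) :
    IntervalIntegrable (fun τ : ℝ => |s - τ| ^ (-α)) volume a b := by
  have h := (abs_rpow_intInt hα1 (s - a) (s - b)).comp_sub_left s
  simpa using h

lemma integral_neg_of_s_neg (r s Δ α : ℝ) (hr : 0 < r) (hΔ : 0 < Δ)
    (hα : 0 < α) (hα1 : α < 1) (hs : s < 0) :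
    (∫ τ in (s - Δ)..(s + Δ), (τ / Real.sqrt (τ ^ 2 + r)) * |s - τ| ^ (-α)) < 0 := by
  set g : ℝ → ℝ := fun τ => τ / Real.sqrt (τ ^ 2 + r) with hg
  set w : ℝ → ℝ := fun τ => |s - τ| ^ (-α) with hw
  have hgc : Continuous g := g_cont hr
  have hgm : StrictMono g := g_strictMono hr
  have hgodd : ∀ x : ℝ, g (-x) = - g x := by
    intro x
    show (-x) / Real.sqrt ((-x) ^ 2 + r) = -(x / Real.sqrt (x ^ 2 + r))
    rw [show ((-x):ℝ) ^ 2 = x ^ 2 by ring, neg_div]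
  have hwint : ∀ a b : ℝ, IntervalIntegrable w volume a b := fun a b => w_intInt hα1 s a b
  have hfint : ∀ a b : ℝ, IntervalIntegrable (fun τ => g τ * w τ) volume a b :=
    fun a b => (hwint a b).continuousOn_mul hgc.continuousOn
  have hgc2 : Continuous (fun τ : ℝ => g (2 * s - τ)) :=
    hgc.comp (continuous_const.sub continuous_id)
  have hf2int : ∀ a b : ℝ, IntervalIntegrable (fun τ => g (2 * s - τ) * w τ) volume a b :=
    fun a b => (hwint a b).continuousOn_mul hgc2.continuousOn
  have hhint : ∀ a b : ℝ,
      IntervalIntegrable (fun τ => (g τ + g (2 * s - τ)) * w τ) volume a b :=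
    fun a b => (hwint a b).continuousOn_mul (hgc.add hgc2).continuousOn
  have hwrefl : ∀ τ : ℝ, w (2 * s - τ) = w τ := by
    intro τ
    show |s - (2 * s - τ)| ^ (-α) = |s - τ| ^ (-α)
    rw [show s - (2 * s - τ) = -(s - τ) by ring, abs_neg]
  have hrefl : (∫ τ in (s - Δ)..(s + Δ), g τ * w τ)
      = ∫ τ in (s - Δ)..(s + Δ), g (2 * s - τ) * w τ := by
    have hc := integral_comp_sub_left (a := s - Δ) (b := s + Δ)
      (fun τ => g τ * w τ) (2 * s)
    rw [show 2 * s - (s + Δ) = s - Δ by ring, show 2 * s - (s - Δ) = s + Δ by ring] at hc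
    rw [← hc]
    refine integral_congr fun τ _ => ?_
    rw [hwrefl τ]
  set I := ∫ τ in (s - Δ)..(s + Δ), g τ * w τ with hI
  have h2I : (∫ τ in (s - Δ)..(s + Δ), (g τ + g (2 * s - τ)) * w τ) = 2 * I := by
    have hadd := integral_add (μ := volume) (hfint (s - Δ) (s + Δ)) (hf2int (s - Δ) (s + Δ))
    simp only [add_mul]
    rw [hadd, ← hrefl, ← hI]
    ring
  have hkey : ∀ τ : ℝ, g τ + g (2 * s - τ) < 0 := by
    intro τ
    have h1 : g (2 * s - τ) = - g (τ - 2 * s) := by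
      rw [show 2 * s - τ = -(τ - 2 * s) by ring, hgodd]
    have h2 : g τ < g (τ - 2 * s) := hgm (by linarith)
    rw [h1]; linarith
  have hneg : ∀ a b : ℝ, a < b → (∀ τ ∈ Ioo a b, s - τ ≠ 0) →
      (∫ τ in a..b, (g τ + g (2 * s - τ)) * w τ) < 0 := by
    intro a b hab hne
    have hpos := intervalIntegral_pos_of_pos_on
      (f := fun τ => -((g τ + g (2 * s - τ)) * w τ)) ((hhint a b).neg)
      (fun τ hτ => by
        have hw0 : 0 < w τ := Real.rpow_pos_of_pos (abs_pos.2 (hne τ hτ)) _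
        have hk := hkey τ
        show 0 < -((g τ + g (2 * s - τ)) * w τ)
        nlinarith [mul_pos (neg_pos.2 hk) hw0]) hab
    rw [intervalIntegral.integral_neg] at hpos
    linarith
  have hsplit : (∫ τ in (s - Δ)..(s + Δ), (g τ + g (2 * s - τ)) * w τ)
      = (∫ τ in (s - Δ)..s, (g τ + g (2 * s - τ)) * w τ)
        + ∫ τ in s..(s + Δ), (g τ + g (2 * s - τ)) * w τ :=
    (integral_add_adjacent_intervals (hhint _ _) (hhint _ _)).symm
  have hn1 := hneg (s - Δ) s (by linarith) (fun τ hτ => by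
    have := hτ.2; intro h; linarith [sub_eq_zero.1 h])
  have hn2 := hneg s (s + Δ) (by linarith) (fun τ hτ => by
    have := hτ.1; intro h; linarith [sub_eq_zero.1 h])
  have : 2 * I < 0 := by rw [← h2I, hsplit]; linarith
  linarith

/-- for `g(τ) = τ/√(τ²+r)` with `r > 0`, `Δ > 0`, `s - Δ < 0 < s + Δ` and
`0 < α < 1`, the integral `∫_{s-Δ}^{s+Δ} g(τ) |s-τ|^{-α} dτ` is strictly negative when `s < 0`
and strictly positive when `s > 0`. -/
theorem integral_sign_of_shifted_kernel (r s Δ α : ℝ) (hr : 0 < r) (hΔ : 0 < Δ)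
    (h1 : s - Δ < 0) (h2 : 0 < s + Δ) (hα : 0 < α) (hα1 : α < 1) :
    (s < 0 → (∫ τ in (s - Δ)..(s + Δ), (τ / Real.sqrt (τ ^ 2 + r)) * |s - τ| ^ (-α)) < 0) ∧
    (0 < s → 0 < ∫ τ in (s - Δ)..(s + Δ), (τ / Real.sqrt (τ ^ 2 + r)) * |s - τ| ^ (-α)) := by
  constructor
  · intro hs
    exact integral_neg_of_s_neg r s Δ α hr hΔ hα hα1 hs
  · intro hs
    have key := integral_neg_of_s_neg r (-s) Δ α hr hΔ hα hα1 (by linarith)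
    have htrans : (∫ τ in (-s - Δ)..(-s + Δ), (τ / Real.sqrt (τ ^ 2 + r)) * |(-s) - τ| ^ (-α))
        = - ∫ τ in (s - Δ)..(s + Δ), (τ / Real.sqrt (τ ^ 2 + r)) * |s - τ| ^ (-α) := by
      have hc := integral_comp_neg (a := s - Δ) (b := s + Δ)
        (fun τ => (τ / Real.sqrt (τ ^ 2 + r)) * |(-s) - τ| ^ (-α))
      rw [show -(s + Δ) = -s - Δ by ring, show -(s - Δ) = -s + Δ by ring] at hc
      rw [← hc]
      have heq : ∀ x : ℝ, (-x / Real.sqrt ((-x) ^ 2 + r)) * |(-s) - (-x)| ^ (-α)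
          = -((x / Real.sqrt (x ^ 2 + r)) * |s - x| ^ (-α)) := by
        intro x
        rw [show ((-x):ℝ) ^ 2 = x ^ 2 by ring, show (-s) - (-x) = -(s - x) by ring,
          abs_neg, neg_div, neg_mul]
      simp only [heq]
      rw [intervalIntegral.integral_neg]
    rw [htrans] at key
    linarith
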